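/- If X has well-defined scattered Π₁-products and A is a homotopy cut-set for paths α, β : [0,1] → X, then either α ≃ β (path-homotopic), or there exists a nonempty perfect set P ⊆ A such that B = P ∪ {0,1} is a homotopy cut-set for α and β, and moreover whenever a component (c,d) of [0,1]\B contains a component (a,b) of [0,1]\A, we have α|_{[c,a]} ≃ β|_{[c,a]} when c < a and α|_{[b,d]} ≃ β|_{[b,d]} when b < d. -/

import Mathlib

open unitInterval

variable {X : Type*} [TopologicalSpace X]

noncomputable def subpath (α : C(ℝ, X)) (a b : ℝ) : Path (α a) (α b) where
  toFun t := α (a + (t : ℝ) * (b - a))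
  continuous_toFun := α.continuous.comp (by continuity)
  source' := by simp
  target' := by
    show α (a + ((1 : unitInterval) : ℝ) * (b - a)) = α b
    rw [Set.Icc.coe_one, one_mul]
    congr 1
    ring

def HomotopyCutSet (α β : C(ℝ, X)) (A : Set ℝ) : Prop :=
  IsClosed A ∧ IsNowhereDense A ∧ A ⊆ Set.Icc 0 1 ∧ (0:ℝ) ∈ A ∧ (1:ℝ) ∈ A ∧
  Set.EqOn α β A ∧
  ∀ a ∈ A, ∀ b ∈ A, a < b → A ∩ Set.Ioo a b = ∅ →
    ∀ (h1 : α a = β a) (h2 : α b = β b),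
      (subpath α a b).Homotopic ((subpath β a b).cast h1 h2)

def awSet (X : Type*) [TopologicalSpace X] : Set X :=
  {x | ∃ γ : ℕ → Path x x, (∀ n, ¬(γ n).Homotopic (Path.refl x)) ∧
    ∀ U ∈ nhds x, ∀ᶠ n in Filter.atTop, Set.range (γ n) ⊆ U}

def ScatteredSet {Y : Type*} [TopologicalSpace Y] (S : Set Y) : Prop :=
  ∀ T ⊆ S, T.Nonempty → ∃ x ∈ T, ∃ U : Set Y, IsOpen U ∧ U ∩ T = {x}

lemma unc_nat_bool : Uncountable (ℕ → Bool) := by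
  rw [← not_countable_iff]
  intro h
  have : Countable (Set ℕ) :=
    Countable.of_equiv (ℕ → Bool)
      ((Equiv.arrowCongr (Equiv.refl ℕ) Equiv.propEquivBool).symm)
  obtain ⟨f, hf⟩ := this.exists_injective_nat
  exact Function.cantor_injective f hf

lemma scattered_of_countable_closed {S : Set ℝ} (hS : IsClosed S) (hc : S.Countable) :
    ScatteredSet S := by
  intro T hTS hT
  by_contra h
  push_neg at h
  have hpre : Preperfect T := by
    rw [preperfect_iff_nhds]
    intro x hx E hE
    obtain ⟨U, hUE, hUo, hxU⟩ := mem_nhds_iff.mp hE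
    have hne : U ∩ T ≠ {x} := h x hx U hUo
    have hxUT : x ∈ U ∩ T := ⟨hxU, hx⟩
    have : ∃ y ∈ U ∩ T, y ≠ x := by
      by_contra hco
      push_neg at hco
      exact hne (Set.eq_singleton_iff_unique_mem.mpr ⟨hxUT, hco⟩)
    obtain ⟨y, hy, hyx⟩ := this
    exact ⟨y, ⟨hUE hy.1, hy.2⟩, hyx⟩
  have hperf := hpre.perfect_closure
  have hsub : closure T ⊆ S := closure_minimal hTS hS
  obtain ⟨f, hrange, _, hinj⟩ := hperf.exists_nat_bool_injection hT.closure
  have hrc : (Set.range f).Countable := (hc.mono hsub).mono hrange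
  have : Countable (ℕ → Bool) := by
    have := hrc.to_subtype
    exact Countable.of_equiv _ (Equiv.ofInjective f hinj).symm
  exact (not_countable_iff.mpr unc_nat_bool) this

lemma homotopic_congr {x y x' y' : X} (hx : x = x') (hy : y = y')
    {γ δ : Path x y} {γ' δ' : Path x' y'}
    (hγ : ∀ t, γ t = γ' t) (hδ : ∀ t, δ t = δ' t) (h : γ.Homotopic δ) :
    γ'.Homotopic δ' := by
  subst hx; subst hy
  have e1 : γ = γ' := Path.ext (funext hγ)
  have e2 : δ = δ' := Path.ext (funext hδ)
  rw [← e1, ← e2]; exact h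

lemma nowheredense_of_countable_closed {S : Set ℝ} (hS : IsClosed S) (hc : S.Countable) :
    IsNowhereDense S := by
  rw [hS.isNowhereDense_iff, interior_eq_empty_iff_dense_compl]
  exact hc.dense_compl ℝ

lemma key
    (hX : ∀ (α β : C(ℝ, X)) (A : Set ℝ), HomotopyCutSet α β A → ScatteredSet A →
      ∀ (h1 : α 0 = β 0) (h2 : α 1 = β 1),
        (subpath α 0 1).Homotopic ((subpath β 0 1).cast h1 h2))
    (α β : C(ℝ, X)) (A : Set ℝ) (hA : HomotopyCutSet α β A)
    {c d : ℝ} (hc : c ∈ A) (hd : d ∈ A) (hcd : c < d)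
    (hcount : (A ∩ Set.Ioo c d).Countable) :
    ∀ (h1 : α c = β c) (h2 : α d = β d),
      (subpath α c d).Homotopic ((subpath β c d).cast h1 h2) := by
  intro h1 h2
  have hdc : (0:ℝ) < d - c := by linarith
  set e : C(ℝ, ℝ) := ⟨fun t => c + t * (d - c), by continuity⟩ with he
  have hmono : StrictMono (e : ℝ → ℝ) := fun a b hab => by
    simp only [he, ContinuousMap.coe_mk]
    have := mul_lt_mul_of_pos_right hab hdc
    linarith
  have he0 : (e : ℝ → ℝ) 0 = c := by simp [he]
  have he1 : (e : ℝ → ℝ) 1 = d := by simp [he]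
  set α' : C(ℝ, X) := α.comp e with hα'
  set β' : C(ℝ, X) := β.comp e with hβ'
  set A' : Set ℝ := (e : ℝ → ℝ) ⁻¹' A ∩ Set.Icc 0 1 with hA'
  have hA'closed : IsClosed A' := (hA.1.preimage e.continuous).inter isClosed_Icc
  have hA'count : A'.Countable := by
    have hsub : A' ⊆ (e : ℝ → ℝ) ⁻¹' ((A ∩ Set.Ioo c d) ∪ {c, d}) := by
      rintro t ⟨htA, ht0, ht1⟩
      simp only [Set.mem_preimage] at htA ⊢
      rcases eq_or_lt_of_le (hmono.monotone ht0) with h | h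
      · rw [he0] at h; right; left; exact h.symm
      rcases eq_or_lt_of_le (hmono.monotone ht1) with h' | h'
      · rw [he1] at h'; right; right; exact h'
      rw [he0] at h; rw [he1] at h'
      exact Or.inl ⟨htA, h, h'⟩
    exact (((hcount.union (Set.toFinite {c, d}).countable).preimage
      hmono.injective).mono hsub)
  have hcut : HomotopyCutSet α' β' A' := by
    refine ⟨hA'closed, nowheredense_of_countable_closed hA'closed hA'count,
      Set.inter_subset_right, ⟨by simpa [Set.mem_preimage, he0], by norm_num⟩,
      ⟨by simpa [Set.mem_preimage, he1], by norm_num⟩, ?_, ?_⟩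
    · intro t ht
      exact hA.2.2.2.2.2.1 ht.1
    · intro p hp q hq hpq hempty h1' h2'
      have hep : (e : ℝ → ℝ) p ∈ A := hp.1
      have heq : (e : ℝ → ℝ) q ∈ A := hq.1
      have hlt : (e : ℝ → ℝ) p < (e : ℝ → ℝ) q := hmono hpq
      have hemp2 : A ∩ Set.Ioo ((e : ℝ → ℝ) p) ((e : ℝ → ℝ) q) = ∅ := by
        rw [Set.eq_empty_iff_forall_notMem]
        rintro y ⟨hyA, hy1, hy2⟩
        set t : ℝ := (y - c) / (d - c) with htdef
        have het : (e : ℝ → ℝ) t = y := by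
          simp only [he, ContinuousMap.coe_mk, htdef]
          field_simp
          ring
        have hpt : p < t := by
          by_contra hle
          push_neg at hle
          have := hmono.monotone hle
          rw [het] at this; linarith
        have htq : t < q := by
          by_contra hle
          push_neg at hle
          have := hmono.monotone hle
          rw [het] at this; linarith
        have htA' : t ∈ A' := ⟨by simpa [Set.mem_preimage, het], le_of_lt (lt_of_le_of_lt hp.2.1 hpt), le_of_lt (lt_of_lt_of_le htq hq.2.2)⟩
        rw [Set.eq_empty_iff_forall_notMem] at hempty
        exact hempty t ⟨htA', hpt, htq⟩
      have h1'' : α ((e : ℝ → ℝ) p) = β ((e : ℝ → ℝ) p) := hA.2.2.2.2.2.1 hep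
      have h2'' : α ((e : ℝ → ℝ) q) = β ((e : ℝ → ℝ) q) := hA.2.2.2.2.2.1 heq
      have hh := hA.2.2.2.2.2.2 _ hep _ heq hlt hemp2 h1'' h2''
      refine homotopic_congr rfl rfl ?_ ?_ hh
      · intro t
        show α _ = α _
        simp only [he, ContinuousMap.coe_mk, hα', ContinuousMap.comp_apply]
        congr 1
        ring
      · intro t
        simp only [Path.cast_coe]
        show β _ = β _
        simp only [he, ContinuousMap.coe_mk, hβ', ContinuousMap.comp_apply]
        congr 1
        ring
  have hscat : ScatteredSet A' := scattered_of_countable_closed hA'closed hA'count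
  have h1' : α' 0 = β' 0 := by
    show α ((e : ℝ → ℝ) 0) = β ((e : ℝ → ℝ) 0)
    rw [he0]; exact h1
  have h2' : α' 1 = β' 1 := by
    show α ((e : ℝ → ℝ) 1) = β ((e : ℝ → ℝ) 1)
    rw [he1]; exact h2
  have hh := hX α' β' A' hcut hscat h1' h2'
  refine homotopic_congr ?_ ?_ ?_ ?_ hh
  · show α ((e : ℝ → ℝ) 0) = α c
    rw [he0]
  · show α ((e : ℝ → ℝ) 1) = α d
    rw [he1]
  · intro t
    show α _ = α _
    simp only [he, ContinuousMap.coe_mk, hα', ContinuousMap.comp_apply]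
    congr 1; ring
  · intro t
    simp only [Path.cast_coe]
    show β _ = β _
    simp only [he, ContinuousMap.coe_mk, hβ', ContinuousMap.comp_apply]
    congr 1; ring

/-- If `X` has well-defined scattered `Π₁`-products and `A` is a homotopy cut-set for paths
`α, β`, then either `α ≃ β` or there is a nonempty perfect `P ⊆ A` such that `B = P ∪ {0,1}` is
a homotopy cut-set for `α, β` and whenever a component `(c,d)` of `[0,1]\B` contains a component
`(a,b)` of `[0,1]\A`, we have `α|_{[c,a]} ≃ β|_{[c,a]}` when `c < a` and
`α|_{[b,d]} ≃ β|_{[b,d]}` when `b < d`. -/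
theorem stmt16 {X : Type*} [TopologicalSpace X]
    (hX : ∀ (α β : C(ℝ, X)) (A : Set ℝ), HomotopyCutSet α β A → ScatteredSet A →
      ∀ (h1 : α 0 = β 0) (h2 : α 1 = β 1),
        (subpath α 0 1).Homotopic ((subpath β 0 1).cast h1 h2))
    (α β : C(ℝ, X)) (A : Set ℝ) (hA : HomotopyCutSet α β A) :
    (∀ (h1 : α 0 = β 0) (h2 : α 1 = β 1),
      (subpath α 0 1).Homotopic ((subpath β 0 1).cast h1 h2)) ∨
    ∃ P ⊆ A, P.Nonempty ∧ Perfect P ∧ HomotopyCutSet α β (P ∪ {0, 1}) ∧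
      ∀ c ∈ P ∪ {0, 1}, ∀ d ∈ P ∪ {0, 1}, c < d → (P ∪ {0, 1}) ∩ Set.Ioo c d = ∅ →
        ∀ a ∈ A, ∀ b ∈ A, a < b → A ∩ Set.Ioo a b = ∅ → Set.Ioo a b ⊆ Set.Ioo c d →
          (c < a → ∀ (h1 : α c = β c) (h2 : α a = β a),
            (subpath α c a).Homotopic ((subpath β c a).cast h1 h2)) ∧
          (b < d → ∀ (h1 : α b = β b) (h2 : α d = β d),
            (subpath α b d).Homotopic ((subpath β b d).cast h1 h2)) := by
  obtain ⟨V, D, hVc, hDp, hAVD⟩ := exists_countable_union_perfect_of_isClosed hA.1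
  have h0A : (0:ℝ) ∈ A := hA.2.2.2.1
  have h1A : (1:ℝ) ∈ A := hA.2.2.2.2.1
  by_cases hD : D.Nonempty
  · right
    have hDA : D ⊆ A := hAVD ▸ Set.subset_union_right
    set B : Set ℝ := D ∪ {0, 1} with hB
    have hBA : B ⊆ A := by
      rintro x (hx | hx)
      · exact hDA hx
      · rcases hx with rfl | hx
        · exact h0A
        · simp only [Set.mem_singleton_iff] at hx; subst hx; exact h1A
    have hBclosed : IsClosed B := hDp.closed.union (Set.toFinite {0, 1}).isClosed
    have hBnd : IsNowhereDense B := by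
      have h1 := hA.2.1
      rw [IsNowhereDense] at h1 ⊢
      rw [← Set.subset_empty_iff, ← h1]
      exact interior_mono (closure_mono hBA)
    -- countability of A between gaps of B
    have hgap : ∀ c ∈ B, ∀ d ∈ B, c < d → B ∩ Set.Ioo c d = ∅ →
        (A ∩ Set.Ioo c d).Countable := by
      intro c hcB d hdB hcd hempty
      have : A ∩ Set.Ioo c d ⊆ V := by
        rintro x ⟨hxA, hx⟩
        rcases hAVD ▸ hxA with hx' | hx'
        · exact hx'
        · exfalso
          rw [Set.eq_empty_iff_forall_notMem] at hempty
          exact hempty x ⟨Or.inl hx', hx⟩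
      exact hVc.mono this
    have hBcut : HomotopyCutSet α β B := by
      refine ⟨hBclosed, hBnd, fun x hx => hA.2.2.1 (hBA hx), Or.inr (by norm_num),
        Or.inr (by norm_num), fun x hx => hA.2.2.2.2.2.1 (hBA hx), ?_⟩
      intro c hcB d hdB hcd hempty h1 h2
      exact key hX α β A hA (hBA hcB) (hBA hdB) hcd (hgap c hcB d hdB hcd hempty) h1 h2
    refine ⟨D, hDA, hD, hDp, hBcut, ?_⟩
    intro c hcB d hdB hcd hempty a haA b hbA hab hAab hsub
    have hm : (a + b) / 2 ∈ Set.Ioo c d := hsub ⟨by linarith, by linarith⟩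
    have had : a < d := lt_trans (by linarith : a < (a+b)/2) hm.2
    have hcb : c < b := lt_trans hm.1 (by linarith : (a+b)/2 < b)
    constructor
    · intro hca h1 h2
      have hcnt : (A ∩ Set.Ioo c a).Countable :=
        (hgap c hcB d hdB hcd hempty).mono
          (Set.inter_subset_inter_right A (Set.Ioo_subset_Ioo le_rfl had.le))
      exact key hX α β A hA (hBA hcB) haA hca hcnt h1 h2
    · intro hbd h1 h2
      have hcnt : (A ∩ Set.Ioo b d).Countable :=
        (hgap c hcB d hdB hcd hempty).mono
          (Set.inter_subset_inter_right A (Set.Ioo_subset_Ioo hcb.le le_rfl))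
      exact key hX α β A hA hbA (hBA hdB) hbd hcnt h1 h2
  · left
    intro h1 h2
    have hAc : A.Countable := by
      rw [Set.not_nonempty_iff_eq_empty] at hD
      rw [hAVD, hD, Set.union_empty]
      exact hVc
    exact key hX α β A hA h0A h1A one_pos (hAc.mono Set.inter_subset_left) h1 h2
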